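/- In the group W = ℤ ≀ ℤ, for every nonzero integer n, the centralizer of the element b·aⁿ equals the cyclic subgroup ⟨b·aⁿ⟩ generated by b·aⁿ. -/

import Mathlib

noncomputable section

namespace ZWrZ

/-- The base group of the restricted wreath product `ℤ ≀ ℤ`: the direct sum
`⨁_{k ∈ ℤ} ℤ`, written multiplicatively. -/
abbrev WBase : Type := Multiplicative (ℤ →₀ ℤ)

/-- The shift-by-one automorphism of the base group, sending `f` to `k ↦ f (k - 1)`. -/
def shiftOne : MulAut WBase :=
  AddEquiv.toMultiplicative (Finsupp.domCongr (Equiv.addRight (1 : ℤ)))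

/-- The action of `ℤ` on the base group by shifting indices: `n` acts as the `n`-th power
of the shift-by-one automorphism. -/
def wreathAction : Multiplicative ℤ →* MulAut WBase :=
  zpowersHom (MulAut WBase) shiftOne

/-- The restricted wreath product `W = ℤ ≀ ℤ`, realized as the semidirect product
`(⨁_{k∈ℤ} ℤ) ⋊ ℤ` in which `ℤ` acts on the direct sum by shifting indices. -/
abbrev W : Type := WBase ⋊[wreathAction] Multiplicative ℤ

/-- The element `a = (0, 1)` of `W`: the generator of the acting copy of `ℤ`. -/
def aW : W := SemidirectProduct.inr (Multiplicative.ofAdd (1 : ℤ))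

/-- The element `b = (e₀, 0)` of `W`: the standard generator of the index-`0` summand of
the base. -/
def bW : W := SemidirectProduct.inl (Multiplicative.ofAdd (Finsupp.single (0 : ℤ) (1 : ℤ)))

/-- The base subgroup `H = {(h, 0)} ≤ W`. -/
def HW : Subgroup W := (SemidirectProduct.inl : WBase →* W).range

end ZWrZ

namespace ZWrZ

lemma shiftOne_apply (x : WBase) (k : ℤ) :
    Multiplicative.toAdd (shiftOne x) k = Multiplicative.toAdd x (k - 1) := rfl

lemma shiftOne_inv_apply (x : WBase) (k : ℤ) :
    Multiplicative.toAdd (shiftOne⁻¹ x) k = Multiplicative.toAdd x (k + 1) := by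
  have h := shiftOne_apply (shiftOne⁻¹ x) (k + 1)
  simpa using h.symm

lemma shift_pow_apply (m : ℤ) (x : WBase) (k : ℤ) :
    Multiplicative.toAdd ((shiftOne ^ m) x) k = Multiplicative.toAdd x (k - m) := by
  induction m using Int.induction_on generalizing x k with
  | zero => simp
  | succ i ih =>
      have : (shiftOne ^ ((i : ℤ) + 1)) x = (shiftOne ^ (i : ℤ)) (shiftOne x) := by
        rw [zpow_add_one]; rfl
      rw [this, ih (shiftOne x), shiftOne_apply]
      ring_nf
  | pred i ih =>
      have : (shiftOne ^ ((-i : ℤ) - 1)) x = (shiftOne ^ (-i : ℤ)) (shiftOne⁻¹ x) := by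
        rw [zpow_sub_one]; rfl
      rw [this, ih (shiftOne⁻¹ x), shiftOne_inv_apply]
      ring_nf

lemma wreathAction_apply (m : ℤ) (x : WBase) (k : ℤ) :
    Multiplicative.toAdd (wreathAction (Multiplicative.ofAdd m) x) k
      = Multiplicative.toAdd x (k - m) := by
  rw [wreathAction, zpowersHom_apply]
  exact shift_pow_apply m x k

lemma exists_big (f : ℤ →₀ ℤ) (m n : ℤ) (hn : n ≠ 0) :
    ∃ i : ℕ, 1 ≤ i ∧ f (m + (i : ℤ) * n) = 0 := by
  have hinj : Function.Injective (fun i : ℕ => m + (i : ℤ) * n) := by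
    intro i j h
    simp only [add_right_inj] at h
    exact_mod_cast mul_right_cancel₀ hn h
  have hfin : {i : ℕ | f (m + (i : ℤ) * n) ≠ 0}.Finite := by
    have : {i : ℕ | f (m + (i : ℤ) * n) ≠ 0}
        = (fun i : ℕ => m + (i : ℤ) * n) ⁻¹' (Function.support f) := rfl
    rw [this]
    exact Set.Finite.preimage hinj.injOn f.finite_support
  obtain ⟨C, hC⟩ := hfin.bddAbove
  refine ⟨C + 1, le_add_self, ?_⟩
  by_contra h
  have : C + 1 ≤ C := hC h
  omega

lemma finsupp_eq_zero_of_period (f : ℤ →₀ ℤ) (n : ℤ) (hn : n ≠ 0)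
    (hper : ∀ k : ℤ, f (k - n) = f k) : f = 0 := by
  ext k
  have hstep : ∀ i : ℕ, f (k + (i : ℤ) * n) = f k := by
    intro i
    induction i with
    | zero => simp
    | succ i ih =>
        have h := hper (k + ((i : ℤ) + 1) * n)
        have e : k + ((i : ℤ) + 1) * n - n = k + (i : ℤ) * n := by ring
        rw [e] at h
        push_cast
        rw [← h, ih]
  obtain ⟨i, _, h0⟩ := exists_big f k n hn
  have := hstep i
  rw [h0] at this
  simp [← this]

/-- In `W = ℤ ≀ ℤ`, for every nonzero integer `n`, the centralizer of
`b * a ^ n` equals the cyclic subgroup generated by `b * a ^ n`. -/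
theorem centralizer_b_mul_a_zpow_eq_zpowers (n : ℤ) (hn : n ≠ 0) :
    Subgroup.centralizer ({bW * aW ^ n} : Set W) = Subgroup.zpowers (bW * aW ^ n) := by
  set g : W := bW * aW ^ n with hg
  have hgr : g.right = Multiplicative.ofAdd n := by
    rw [hg, SemidirectProduct.mul_right]
    have : aW ^ n = SemidirectProduct.inr ((Multiplicative.ofAdd (1:ℤ)) ^ n) := by
      rw [aW, ← map_zpow]
    rw [this, SemidirectProduct.right_inr, bW, SemidirectProduct.right_inl, one_mul]
    have h2 : ((Multiplicative.ofAdd (1:ℤ)) ^ n) = Multiplicative.ofAdd n := by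
      apply Multiplicative.toAdd.injective
      rw [toAdd_zpow]; simp
    rw [h2]
  have hgl : g.left = Multiplicative.ofAdd (Finsupp.single (0:ℤ) (1:ℤ)) := by
    rw [hg, SemidirectProduct.mul_left]
    have : aW ^ n = SemidirectProduct.inr ((Multiplicative.ofAdd (1:ℤ)) ^ n) := by
      rw [aW, ← map_zpow]
    rw [this, SemidirectProduct.left_inr, map_one, bW, SemidirectProduct.left_inl, mul_one]
  apply le_antisymm
  · intro w hw
    rw [Subgroup.mem_centralizer_singleton_iff] at hw
    -- hw : w * g = g * w
    set f : ℤ →₀ ℤ := Multiplicative.toAdd w.left with hf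
    set m : ℤ := Multiplicative.toAdd w.right with hm
    have E : ∀ k : ℤ, (Finsupp.single (0:ℤ) (1:ℤ)) k + f (k - n)
        = f k + (Finsupp.single (0:ℤ) (1:ℤ)) (k - m) := by
      intro k
      have h1 := congrArg (fun z : W => Multiplicative.toAdd z.left k) hw.symm
      simp only [SemidirectProduct.mul_left, toAdd_mul, Finsupp.add_apply] at h1
      rw [hgr, hgl, ← ofAdd_toAdd w.right] at h1
      rw [wreathAction_apply, wreathAction_apply] at h1
      simpa [hf, hm] using h1
    have Eneq : ∀ k : ℤ, k ≠ 0 → k ≠ m → f (k - n) = f k := by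
      intro k hk0 hkm
      have h := E k
      rw [Finsupp.single_apply, Finsupp.single_apply] at h
      rw [if_neg (fun h' => hk0 h'.symm), if_neg (fun h' => hkm (by omega))] at h
      omega
    have hdvd : n ∣ m := by
      by_contra hnd
      have hm0 : m ≠ 0 := fun h => hnd (h ▸ dvd_zero n)
      have hup : ∀ i : ℕ, f (m + (i : ℤ) * n) = f m := by
        intro i
        induction i with
        | zero => simp
        | succ i ih =>
            have h1 : (m + ((i : ℤ) + 1) * n) ≠ 0 := by
              intro h
              exact hnd ⟨-((i : ℤ) + 1), by linarith⟩
            have h2 : (m + ((i : ℤ) + 1) * n) ≠ m := by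
              intro h
              have : ((i : ℤ) + 1) * n = 0 := by omega
              rcases mul_eq_zero.mp this with h' | h'
              · omega
              · exact hn h'
            have h := Eneq _ h1 h2
            have e : m + ((i : ℤ) + 1) * n - n = m + (i : ℤ) * n := by ring
            rw [e] at h
            push_cast
            rw [← h, ih]
      have hdown : ∀ i : ℕ, 1 ≤ i → f (m - (i : ℤ) * n) = f m + 1 := by
        intro i hi
        induction i, hi using Nat.le_induction with
        | base =>
            have h := E m
            rw [Finsupp.single_apply, Finsupp.single_apply] at h
            rw [if_neg (fun h' => hm0 h'.symm), if_pos (by omega)] at h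
            push_cast
            have e : m - (1 : ℤ) * n = m - n := by ring
            rw [e]
            omega
        | succ i hi ih =>
            have h1 : (m - (i : ℤ) * n) ≠ 0 := by
              intro h
              exact hnd ⟨(i : ℤ), by linarith⟩
            have h2 : (m - (i : ℤ) * n) ≠ m := by
              intro h
              have : (i : ℤ) * n = 0 := by omega
              rcases mul_eq_zero.mp this with h' | h'
              · have : (i : ℤ) ≥ 1 := by exact_mod_cast hi
                omega
              · exact hn h'
            have h := Eneq _ h1 h2
            have e : m - (i : ℤ) * n - n = m - ((i : ℤ) + 1) * n := by ring
            rw [e] at h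
            push_cast
            rw [h, ih]
      obtain ⟨i1, _, hv1⟩ := exists_big f m n hn
      obtain ⟨i2, hi2, hv2⟩ := exists_big f m (-n) (neg_ne_zero.mpr hn)
      have e2 : m + (i2 : ℤ) * (-n) = m - (i2 : ℤ) * n := by ring
      rw [e2] at hv2
      have a1 := hup i1
      have a2 := hdown i2 hi2
      rw [hv1] at a1
      rw [hv2] at a2
      omega
    obtain ⟨j, hj⟩ := hdvd
    rw [Subgroup.mem_zpowers_iff]
    refine ⟨j, ?_⟩
    set u : W := w * g ^ (-j) with hu
    have hcu : u * g = g * u := by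
      rw [hu, mul_assoc, ((Commute.refl g).zpow_left (-j)).eq, ← mul_assoc, hw, mul_assoc]
    have hur : u.right = 1 := by
      rw [← toAdd_eq_zero, hu, SemidirectProduct.mul_right, toAdd_mul]
      have : (g ^ (-j)).right = g.right ^ (-j) := by
        have := map_zpow (SemidirectProduct.rightHom :
          W →* Multiplicative ℤ) g (-j)
        simpa [SemidirectProduct.rightHom_eq_right] using this
      rw [this, hgr, toAdd_zpow]
      simp only [toAdd_ofAdd, smul_eq_mul, ← hm]
      rw [hj]; ring
    have hul : u.left = 1 := by
      have hlefts := congrArg SemidirectProduct.left hcu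
      simp only [SemidirectProduct.mul_left, hur, map_one, MulAut.one_apply] at hlefts
      -- hlefts : u.left * g.left = g.left * wreathAction g.right u.left
      have hcc : (wreathAction g.right) u.left = u.left := by
        have := mul_left_cancel (a := g.left)
          (b := (wreathAction g.right) u.left) (c := u.left) ?_
        · exact this
        · rw [← hlefts, mul_comm]
      have hper : ∀ k : ℤ, Multiplicative.toAdd u.left (k - n) = Multiplicative.toAdd u.left k := by
        intro k
        have h := congrArg (fun z : WBase => Multiplicative.toAdd z k) hcc
        rw [hgr, wreathAction_apply] at h
        exact h
      have : Multiplicative.toAdd u.left = 0 :=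
        finsupp_eq_zero_of_period _ n hn hper
      rw [← ofAdd_toAdd u.left, this]
      rfl
    have hu1 : u = 1 := by
      apply SemidirectProduct.ext
      · rw [hul, SemidirectProduct.one_left]
      · rw [hur, SemidirectProduct.one_right]
    have : w * g ^ (-j) = 1 := hu ▸ hu1
    rw [zpow_neg] at this
    exact (eq_comm.mp (mul_inv_eq_one.mp this))
  · exact Subgroup.zpowers_le.mpr (Subgroup.mem_centralizer_singleton_iff.mpr rfl)

end ZWrZ
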